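/- Let m = 5, p, q ∈ ℕ, and λ ∈ ℂ. Let W_{p,q,λ,0} denote the set of vertex functions f on C_5^N supported in Σ_{p,q} such that A_- f = 0, R_1 f = λ • f, and A_0 f = μ • f for some μ ∈ ℂ. Let G denote the set of operators consisting of A_0 together with all operators of the form g ↦ 𝟙_{Σ_{p',q'}} · (A_+ g) for p', q' ∈ ℕ (the subadjacencies of A_+), and let V_{p,q,λ} be the ℂ-linear span of all vectors (T_1 ∘ T_2 ∘ ⋯ ∘ T_j) f with j ∈ ℕ, each T_i ∈ G, and f ∈ W_{p,q,λ,0}. Then V_{p,q,λ} is invariant under the adjacency operator: for every g ∈ V_{p,q,λ}, A g ∈ V_{p,q,λ}. -/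

import Mathlib

open Finset

/-- The standard generator `e_k` of `(ZMod m)^N`: equal to `1` in coordinate `k`,
`0` elsewhere. -/
def eV (N m : ℕ) (k : Fin N) : Fin N → ZMod m :=
  fun j => if j = k then 1 else 0

/-- Adjacency in the Cayley graph `C_m^N`: `v ∼ w` iff `w = v + e_k` or `w = v - e_k`
for some coordinate `k`. -/
def adj (N m : ℕ) (v w : Fin N → ZMod m) : Prop :=
  ∃ k : Fin N, w = v + eV N m k ∨ w = v - eV N m k

/-- The `k`-th level of a vertex: `d_k(v) = min((v k).val, m - (v k).val)`. -/
def lev (N m : ℕ) (v : Fin N → ZMod m) (k : Fin N) : ℕ :=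
  min ((v k).val) (m - (v k).val)

/-- Path distance of a vertex to the origin: `d(v) = Σ_k d_k(v)`. -/
def distO (N m : ℕ) (v : Fin N → ZMod m) : ℕ :=
  ∑ k : Fin N, lev N m v k

open Classical in
/-- Adjacency operator: `(A f)(v) = Σ_{w ∼ v} f(w)`. -/
noncomputable def Aop (N m : ℕ) [NeZero m] (f : (Fin N → ZMod m) → ℂ) :
    (Fin N → ZMod m) → ℂ :=
  fun v => ∑ w : Fin N → ZMod m, if adj N m v w then f w else 0

open Classical in
/-- Outer adjacency: `(A₊ f)(v) = Σ_{w ∼ v, d(w) < d(v)} f(w)`. -/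
noncomputable def Aplus (N m : ℕ) [NeZero m] (f : (Fin N → ZMod m) → ℂ) :
    (Fin N → ZMod m) → ℂ :=
  fun v => ∑ w : Fin N → ZMod m,
    if adj N m v w ∧ distO N m w < distO N m v then f w else 0

open Classical in
/-- Inner adjacency: `(A₋ f)(v) = Σ_{w ∼ v, d(w) > d(v)} f(w)`. -/
noncomputable def Aminus (N m : ℕ) [NeZero m] (f : (Fin N → ZMod m) → ℂ) :
    (Fin N → ZMod m) → ℂ :=
  fun v => ∑ w : Fin N → ZMod m,
    if adj N m v w ∧ distO N m v < distO N m w then f w else 0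

open Classical in
/-- Neutral adjacency: `(A₀ f)(v) = Σ_{w ∼ v, d(w) = d(v)} f(w)`. -/
noncomputable def Azero (N m : ℕ) [NeZero m] (f : (Fin N → ZMod m) → ℂ) :
    (Fin N → ZMod m) → ℂ :=
  fun v => ∑ w : Fin N → ZMod m,
    if adj N m v w ∧ distO N m w = distO N m v then f w else 0

/-- The `k`-reflection `ṽ_k` of a vertex: negate the `k`-th coordinate. -/
def reflV (N m : ℕ) (k : Fin N) (v : Fin N → ZMod m) : Fin N → ZMod m :=
  Function.update v k (-(v k))

/-- Level-one reflection sum: `(R₁ f)(v) = Σ_{k : d_k(v) = 1} f(ṽ_k)`. -/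
noncomputable def R1 (N m : ℕ) (f : (Fin N → ZMod m) → ℂ) :
    (Fin N → ZMod m) → ℂ :=
  fun v => ∑ k ∈ Finset.univ.filter (fun k => lev N m v k = 1), f (reflV N m k v)

/-- Number of coordinates of `v` at level `ℓ`. -/
def cardLev (N m : ℕ) (v : Fin N → ZMod m) (ℓ : ℕ) : ℕ :=
  (Finset.univ.filter (fun k => lev N m v k = ℓ)).card

open Classical in
/-- The subadjacency of `A₊` with target `Σ_{p',q'}`:
`g ↦ 𝟙_{Σ_{p',q'}} ⬝ (A₊ g)`. -/
noncomputable def subPlus (N p' q' : ℕ) (g : (Fin N → ZMod 5) → ℂ) :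
    (Fin N → ZMod 5) → ℂ :=
  fun v => if cardLev N 5 v 1 = p' ∧ cardLev N 5 v 2 = q'
    then Aplus N 5 g v else 0

/-- The set of generating operators: `A₀` together with all subadjacencies of `A₊`. -/
def Gops (N : ℕ) : Set (((Fin N → ZMod 5) → ℂ) → ((Fin N → ZMod 5) → ℂ)) :=
  {T | T = Azero N 5 ∨ ∃ p' q' : ℕ, T = subPlus N p' q'}

/-- `W_{p,q,λ,0}`: vertex functions supported in `Σ_{p,q}`, in the kernel of `A₋`,
that are `λ`-eigenvectors of `R₁` and eigenvectors of `A₀`. -/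
def W5 (N p q : ℕ) (lam : ℂ) : Set ((Fin N → ZMod 5) → ℂ) :=
  {f | (∀ v, ¬(cardLev N 5 v 1 = p ∧ cardLev N 5 v 2 = q) → f v = 0) ∧
       Aminus N 5 f = 0 ∧ R1 N 5 f = lam • f ∧ ∃ μ : ℂ, Azero N 5 f = μ • f}

/-- `V_{p,q,λ}`: the span of all images of elements of `W_{p,q,λ,0}` under finite
compositions of operators from `Gops`. -/
noncomputable def V5 (N p q : ℕ) (lam : ℂ) : Submodule ℂ ((Fin N → ZMod 5) → ℂ) :=
  Submodule.span ℂ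
    {g | ∃ L : List (((Fin N → ZMod 5) → ℂ) → ((Fin N → ZMod 5) → ℂ)),
      (∀ T ∈ L, T ∈ Gops N) ∧ ∃ f ∈ W5 N p q lam, g = L.foldr (fun T h => T h) f}

namespace C5
variable {N : ℕ}
abbrev Vtx (N : ℕ) := Fin N → ZMod 5

def locLev (x : ZMod 5) : ℕ := min x.val (5 - x.val)

lemma lev_eq_locLev (v : Vtx N) (k : Fin N) : lev N 5 v k = locLev (v k) := rfl

noncomputable def glob (N : ℕ) (M : ZMod 5 → ZMod 5 → ℤ) (f : Vtx N → ℂ) : Vtx N → ℂ :=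
  fun v => ∑ k : Fin N, ∑ t : ZMod 5, (M (v k) t : ℂ) * f (Function.update v k t)

lemma add_eV (v : Vtx N) (k : Fin N) : v + eV N 5 k = Function.update v k (v k + 1) := by
  funext j
  by_cases h : j = k <;> simp [eV, Function.update, h]

lemma sub_eV (v : Vtx N) (k : Fin N) : v - eV N 5 k = Function.update v k (v k + -1) := by
  funext j
  by_cases h : j = k <;> simp [eV, Function.update, h, sub_eq_add_neg]

open Classical in
/-- key neighbor-sum lemma -/
lemma sum_adj (v : Vtx N) (F : Vtx N → ℂ) :
    (∑ w : Vtx N, if adj N 5 v w then F w else 0) =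
      ∑ k : Fin N, (F (Function.update v k (v k + 1)) + F (Function.update v k (v k + -1))) := by
  classical
  have hne : ∀ b : Bool, (if b then (1 : ZMod 5) else -1) ≠ 0 := by decide
  have hset : (Finset.univ.filter (fun w => adj N 5 v w)) =
      Finset.image (fun p : Fin N × Bool =>
        Function.update v p.1 (v p.1 + (if p.2 then 1 else -1))) Finset.univ := by
    ext w
    simp only [Finset.mem_filter, Finset.mem_univ, true_and, Finset.mem_image]
    constructor
    · rintro ⟨k, h | h⟩
      · exact ⟨(k, true), by simp [h, add_eV]⟩
      · exact ⟨(k, false), by rw [h, sub_eV]; simp⟩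
    · rintro ⟨⟨k, b⟩, -, rfl⟩
      refine ⟨k, ?_⟩
      cases b
      · right; rw [sub_eV]; simp
      · left; rw [add_eV]; simp
  have hinj : Set.InjOn (fun p : Fin N × Bool =>
      Function.update v p.1 (v p.1 + (if p.2 then 1 else -1))) ↑(Finset.univ : Finset (Fin N × Bool)) := by
    rintro ⟨k, b⟩ - ⟨j, c⟩ - h
    simp only at h
    by_cases hkj : k = j
    · subst hkj
      have h2 := congrFun h k
      simp only [Function.update_self] at h2
      have hbc : (if b then (1:ZMod 5) else -1) = (if c then 1 else -1) :=
        add_left_cancel h2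
      have : b = c := by
        cases b <;> cases c <;> first | rfl | (exfalso; revert hbc; decide)
      simp [this]
    · exfalso
      have h2 := congrFun h k
      rw [Function.update_self, Function.update_of_ne hkj] at h2
      exact hne b (by linear_combination h2)
  rw [← Finset.sum_filter, hset, Finset.sum_image hinj]
  rw [Fintype.sum_prod_type]
  refine Finset.sum_congr rfl fun k _ => ?_
  simp [Fintype.sum_bool]

lemma lev_update (v : Vtx N) (k j : Fin N) (t : ZMod 5) :
    lev N 5 (Function.update v k t) j = if j = k then locLev t else lev N 5 v j := by
  by_cases h : j = k
  · subst h; simp [lev_eq_locLev, Function.update_self]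
  · simp [lev_eq_locLev, Function.update_of_ne h, h]

lemma distO_update (v : Vtx N) (k : Fin N) (t : ZMod 5) :
    distO N 5 (Function.update v k t) + lev N 5 v k = distO N 5 v + locLev t := by
  classical
  unfold distO
  rw [← Finset.add_sum_erase _ _ (Finset.mem_univ k),
      ← Finset.add_sum_erase Finset.univ (fun j => lev N 5 v j) (Finset.mem_univ k)]
  have h1 : lev N 5 (Function.update v k t) k = locLev t := by simp [lev_update]
  have h2 : ∀ j ∈ Finset.univ.erase k, lev N 5 (Function.update v k t) j = lev N 5 v j := by
    intro j hj
    rw [lev_update, if_neg (Finset.mem_erase.mp hj).1]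
  rw [h1, Finset.sum_congr rfl h2]
  ring

lemma cardLev_update (v : Vtx N) (k : Fin N) (t : ZMod 5) (ℓ : ℕ) :
    cardLev N 5 (Function.update v k t) ℓ + (if lev N 5 v k = ℓ then 1 else 0) =
      cardLev N 5 v ℓ + (if locLev t = ℓ then 1 else 0) := by
  classical
  unfold cardLev
  rw [Finset.card_filter, Finset.card_filter]
  rw [← Finset.add_sum_erase _ _ (Finset.mem_univ k),
      ← Finset.add_sum_erase Finset.univ (fun j => if lev N 5 v j = ℓ then (1:ℕ) else 0) (Finset.mem_univ k)]
  have h1 : lev N 5 (Function.update v k t) k = locLev t := by simp [lev_update]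
  have h2 : ∀ j ∈ Finset.univ.erase k, (if lev N 5 (Function.update v k t) j = ℓ then (1:ℕ) else 0) = (if lev N 5 v j = ℓ then 1 else 0) := by
    intro j hj
    rw [lev_update, if_neg (Finset.mem_erase.mp hj).1]
  rw [h1, Finset.sum_congr rfl h2]
  ring

lemma cardLev_le (v : Vtx N) (ℓ : ℕ) : cardLev N 5 v ℓ ≤ N := by
  classical
  calc cardLev N 5 v ℓ ≤ (Finset.univ : Finset (Fin N)).card := Finset.card_filter_le _ _
  _ = N := by simp

def matMul (M M' : ZMod 5 → ZMod 5 → ℤ) : ZMod 5 → ZMod 5 → ℤ :=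
  fun x t => ∑ s : ZMod 5, M x s * M' s t

def brkt (M M' : ZMod 5 → ZMod 5 → ℤ) : ZMod 5 → ZMod 5 → ℤ :=
  fun x t => matMul M M' x t - matMul M' M x t

lemma glob_fn_add (M : ZMod 5 → ZMod 5 → ℤ) (f g : Vtx N → ℂ) :
    glob N M (f + g) = glob N M f + glob N M g := by
  funext v
  simp [glob, mul_add, Finset.sum_add_distrib]

lemma glob_fn_smul (M : ZMod 5 → ZMod 5 → ℤ) (c : ℂ) (f : Vtx N → ℂ) :
    glob N M (c • f) = c • glob N M f := by
  funext v
  simp [glob, Finset.mul_sum]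
  congr 1; funext k; congr 1; funext t; ring

lemma glob_fn_zero (M : ZMod 5 → ZMod 5 → ℤ) : glob N M (0 : Vtx N → ℂ) = 0 := by
  funext v; simp [glob]

noncomputable def globHom (M : ZMod 5 → ZMod 5 → ℤ) : (Vtx N → ℂ) →+ (Vtx N → ℂ) :=
  AddMonoidHom.mk' (glob N M) (glob_fn_add M)

lemma glob_fn_sum {ι : Type*} (M : ZMod 5 → ZMod 5 → ℤ) (s : Finset ι) (F : ι → Vtx N → ℂ) :
    glob N M (∑ i ∈ s, F i) = ∑ i ∈ s, glob N M (F i) :=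
  map_sum (globHom (N := N) M) F s

lemma glob_madd (M M' : ZMod 5 → ZMod 5 → ℤ) (f : Vtx N → ℂ) :
    glob N (fun x t => M x t + M' x t) f = glob N M f + glob N M' f := by
  funext v
  simp [glob, add_mul, Finset.sum_add_distrib]

lemma glob_msub (M M' : ZMod 5 → ZMod 5 → ℤ) (f : Vtx N → ℂ) :
    glob N (fun x t => M x t - M' x t) f = glob N M f - glob N M' f := by
  funext v
  simp [glob, sub_mul, Finset.sum_sub_distrib]

lemma glob_mneg (M : ZMod 5 → ZMod 5 → ℤ) (f : Vtx N → ℂ) :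
    glob N (fun x t => -(M x t)) f = -(glob N M f) := by
  funext v
  simp [glob]

lemma glob_mzero (f : Vtx N → ℂ) : glob N (fun _ _ => (0:ℤ)) f = 0 := by
  funext v; simp [glob]

lemma glob_msmul (c : ℤ) (M : ZMod 5 → ZMod 5 → ℤ) (f : Vtx N → ℂ) :
    glob N (fun x t => c * M x t) f = (c : ℂ) • glob N M f := by
  funext v
  simp [glob, Finset.mul_sum]
  congr 1; funext k; congr 1; funext t; ring

lemma glob_update (M' : ZMod 5 → ZMod 5 → ℤ) (f : Vtx N → ℂ) (v : Vtx N) (k : Fin N) (t : ZMod 5) :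
    glob N M' f (Function.update v k t) =
      (∑ s : ZMod 5, (M' t s : ℂ) * f (Function.update v k s)) +
      ∑ j ∈ Finset.univ.erase k, ∑ s : ZMod 5,
        (M' (v j) s : ℂ) * f (Function.update (Function.update v k t) j s) := by
  classical
  unfold glob
  rw [← Finset.add_sum_erase _ _ (Finset.mem_univ k)]
  congr 1
  · rw [Function.update_self]
    congr 1
    funext s
    rw [Function.update_idem]
  · refine Finset.sum_congr rfl fun j hj => ?_
    rw [Function.update_of_ne (Finset.mem_erase.mp hj).1]

noncomputable def cross (N : ℕ) (M M' : ZMod 5 → ZMod 5 → ℤ) (f : Vtx N → ℂ) (v : Vtx N) : ℂ :=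
  ∑ k : Fin N, ∑ j ∈ Finset.univ.erase k, ∑ t : ZMod 5, ∑ s : ZMod 5,
    (M (v k) t : ℂ) * (M' (v j) s : ℂ) * f (Function.update (Function.update v k t) j s)

lemma glob_glob (M M' : ZMod 5 → ZMod 5 → ℤ) (f : Vtx N → ℂ) (v : Vtx N) :
    glob N M (glob N M' f) v = glob N (matMul M M') f v + cross N M M' f v := by
  classical
  conv_lhs => rw [glob]
  have : ∀ k : Fin N, ∑ t : ZMod 5, (M (v k) t : ℂ) * glob N M' f (Function.update v k t) =
      (∑ t : ZMod 5, ∑ s : ZMod 5, (M (v k) t : ℂ) * ((M' t s : ℂ) * f (Function.update v k s))) +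
      ∑ t : ZMod 5, ∑ j ∈ Finset.univ.erase k, ∑ s : ZMod 5,
        (M (v k) t : ℂ) * ((M' (v j) s : ℂ) * f (Function.update (Function.update v k t) j s)) := by
    intro k
    rw [← Finset.sum_add_distrib]
    refine Finset.sum_congr rfl fun t _ => ?_
    rw [glob_update]
    simp only [mul_add, Finset.mul_sum]
  rw [Finset.sum_congr rfl (fun k _ => this k), Finset.sum_add_distrib]
  congr 1
  · rw [glob]
    refine Finset.sum_congr rfl fun k _ => ?_
    rw [Finset.sum_comm]
    refine Finset.sum_congr rfl fun s _ => ?_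
    have : ((matMul M M' (v k) s : ℤ) : ℂ) = ∑ t : ZMod 5, (M (v k) t : ℂ) * (M' t s : ℂ) := by
      rw [matMul]
      push_cast
      rfl
    rw [this, Finset.sum_mul]
    refine Finset.sum_congr rfl fun t _ => ?_
    ring
  · rw [cross]
    refine Finset.sum_congr rfl fun k _ => ?_
    rw [Finset.sum_comm]
    refine Finset.sum_congr rfl fun j hj => Finset.sum_congr rfl fun t _ =>
      Finset.sum_congr rfl fun s _ => by ring

lemma cross_symm (M M' : ZMod 5 → ZMod 5 → ℤ) (f : Vtx N → ℂ) (v : Vtx N) :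
    cross N M M' f v = cross N M' M f v := by
  classical
  unfold cross
  rw [Finset.sum_comm' (s := Finset.univ) (t := fun k => Finset.univ.erase k)
      (t' := Finset.univ) (s' := fun j => Finset.univ.erase j)
      (by intro x y; simp [Finset.mem_erase]; tauto)]
  refine Finset.sum_congr rfl fun j _ => Finset.sum_congr rfl fun k hk => ?_
  have hkj : k ≠ j := (Finset.mem_erase.mp hk).1
  rw [Finset.sum_comm]
  refine Finset.sum_congr rfl fun s _ => Finset.sum_congr rfl fun t _ => ?_
  rw [Function.update_comm hkj]
  ring

lemma glob_comm (M M' : ZMod 5 → ZMod 5 → ℤ) (f : Vtx N → ℂ) :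
    glob N M (glob N M' f) = glob N M' (glob N M f) + glob N (brkt M M') f := by
  funext v
  have h1 := glob_glob M M' f v
  have h2 := glob_glob M' M f v
  have h3 := cross_symm M M' f v
  have : glob N (brkt M M') f v = glob N (matMul M M') f v - glob N (matMul M' M) f v := by
    have := glob_msub (matMul M M') (matMul M' M) f
    exact congrFun this v
  simp only [Pi.add_apply, this]
  rw [h1, h2, h3]
  ring

def mL10 : ZMod 5 → ZMod 5 → ℤ := fun x t => if (x = 1 ∨ x = 4) ∧ t = 0 then 1 else 0
def mL21 : ZMod 5 → ZMod 5 → ℤ := fun x t => if (x = 2 ∧ t = 1) ∨ (x = 3 ∧ t = 4) then 1 else 0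
def mR01 : ZMod 5 → ZMod 5 → ℤ := fun x t => if x = 0 ∧ (t = 1 ∨ t = 4) then 1 else 0
def mR12 : ZMod 5 → ZMod 5 → ℤ := fun x t => if (x = 1 ∧ t = 2) ∨ (x = 4 ∧ t = 3) then 1 else 0
def mAzero : ZMod 5 → ZMod 5 → ℤ := fun x t => if (x = 2 ∧ t = 3) ∨ (x = 3 ∧ t = 2) then 1 else 0
def mS1 : ZMod 5 → ZMod 5 → ℤ := fun x t => if (x = 1 ∧ t = 4) ∨ (x = 4 ∧ t = 1) then 1 else 0
def mB0 : ZMod 5 → ZMod 5 → ℤ := fun x t => if (x = 1 ∧ t = 3) ∨ (x = 4 ∧ t = 2) then 1 else 0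
def mB1 : ZMod 5 → ZMod 5 → ℤ := fun x t => if (x = 2 ∧ t = 4) ∨ (x = 3 ∧ t = 1) then 1 else 0
def mB2 : ZMod 5 → ZMod 5 → ℤ := fun x t => if (x = 2 ∨ x = 3) ∧ t = 0 then 1 else 0
def mId : ZMod 5 → ZMod 5 → ℤ := fun x t => if t = x then 1 else 0
def mP1 : ZMod 5 → ZMod 5 → ℤ := fun x t => if (x = 1 ∨ x = 4) ∧ t = x then 1 else 0
def mP2 : ZMod 5 → ZMod 5 → ℤ := fun x t => if (x = 2 ∨ x = 3) ∧ t = x then 1 else 0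
def mAplus : ZMod 5 → ZMod 5 → ℤ :=
  fun x t => if (t = x + 1 ∨ t = x + -1) ∧ locLev t < locLev x then 1 else 0
def mAminus : ZMod 5 → ZMod 5 → ℤ :=
  fun x t => if (t = x + 1 ∨ t = x + -1) ∧ locLev x < locLev t then 1 else 0

open Classical in
lemma conv_generic (v : Vtx N) (f : Vtx N → ℂ) (P : Vtx N → Prop)
    [inst : DecidablePred fun w : Vtx N => adj N 5 v w ∧ P w] (M : ZMod 5 → ZMod 5 → ℤ)
    (hM : ∀ k : Fin N, ∀ t : ZMod 5, (t = v k + 1 ∨ t = v k + -1) →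
      ((M (v k) t = 1 ∧ P (Function.update v k t)) ∨ (M (v k) t = 0 ∧ ¬P (Function.update v k t))))
    (hM2 : ∀ x t, ¬(t = x + 1 ∨ t = x + -1) → M x t = 0) :
    (∑ w : Vtx N, if adj N 5 v w ∧ P w then f w else 0) = glob N M f v := by
  classical
  have hsplit : ∀ w : Vtx N, (if adj N 5 v w ∧ P w then f w else 0) =
      (if adj N 5 v w then (if P w then f w else 0) else 0) := by
    intro w
    by_cases h1 : adj N 5 v w <;> by_cases h2 : P w <;> simp [h1, h2]
  rw [Finset.sum_congr rfl (fun w _ => hsplit w), sum_adj]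
  unfold glob
  refine Finset.sum_congr rfl fun k _ => ?_
  have hne : (v k + 1) ≠ (v k + -1) := by
    have : ∀ x : ZMod 5, x + 1 ≠ x + -1 := by decide
    exact this (v k)
  have hvanish : ∀ t ∈ (Finset.univ : Finset (ZMod 5)),
      t ∉ ({v k + 1, v k + -1} : Finset (ZMod 5)) →
      (M (v k) t : ℂ) * f (Function.update v k t) = 0 := by
    intro t _ ht
    simp only [Finset.mem_insert, Finset.mem_singleton] at ht
    push_neg at ht
    rw [hM2 _ _ (by tauto)]
    simp
  rw [← Finset.sum_subset (Finset.subset_univ {v k + 1, v k + -1}) hvanish,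
      Finset.sum_pair hne]
  have heval : ∀ t : ZMod 5, (t = v k + 1 ∨ t = v k + -1) →
      (M (v k) t : ℂ) * f (Function.update v k t) =
        (if P (Function.update v k t) then f (Function.update v k t) else 0) := by
    intro t ht
    rcases hM k t ht with ⟨h1, h2⟩ | ⟨h1, h2⟩
    · rw [h1, if_pos h2]; simp
    · rw [h1, if_neg h2]; simp
  rw [heval _ (Or.inl rfl), heval _ (Or.inr rfl)]

open Classical in
lemma Aplus_eq_glob (f : Vtx N → ℂ) : Aplus N 5 f = glob N mAplus f := by
  funext v
  show (∑ w : Vtx N, if adj N 5 v w ∧ distO N 5 w < distO N 5 v then f w else 0) = _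
  refine conv_generic v f (fun w => distO N 5 w < distO N 5 v) mAplus ?_ ?_
  · intro k t ht
    have hd := distO_update v k t
    rw [lev_eq_locLev] at hd
    by_cases hc : locLev t < locLev (v k)
    · left
      refine ⟨by simp [mAplus, ht, hc], by omega⟩
    · right
      refine ⟨by simp [mAplus, hc], by omega⟩
  · intro x t ht
    simp [mAplus, ht]

open Classical in
lemma Aminus_eq_glob (f : Vtx N → ℂ) : Aminus N 5 f = glob N mAminus f := by
  funext v
  show (∑ w : Vtx N, if adj N 5 v w ∧ distO N 5 v < distO N 5 w then f w else 0) = _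
  refine conv_generic v f (fun w => distO N 5 v < distO N 5 w) mAminus ?_ ?_
  · intro k t ht
    have hd := distO_update v k t
    rw [lev_eq_locLev] at hd
    by_cases hc : locLev (v k) < locLev t
    · left
      refine ⟨by simp [mAminus, ht, hc], by omega⟩
    · right
      refine ⟨by simp [mAminus, hc], by omega⟩
  · intro x t ht
    simp [mAminus, ht]

open Classical in
lemma Azero_eq_glob (f : Vtx N → ℂ) : Azero N 5 f = glob N mAzero f := by
  funext v
  show (∑ w : Vtx N, if adj N 5 v w ∧ distO N 5 w = distO N 5 v then f w else 0) = _
  refine conv_generic v f (fun w => distO N 5 w = distO N 5 v) mAzero ?_ ?_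
  · intro k t ht
    have hd := distO_update v k t
    rw [lev_eq_locLev] at hd
    have hz : ∀ x t : ZMod 5, (t = x + 1 ∨ t = x + -1) →
        (mAzero x t = 1 ∧ locLev t = locLev x) ∨ (mAzero x t = 0 ∧ locLev t ≠ locLev x) := by
      decide
    rcases hz (v k) t ht with ⟨h1, h2⟩ | ⟨h1, h2⟩
    · left; exact ⟨h1, by omega⟩
    · right; exact ⟨h1, by omega⟩
  · intro x t ht
    have hz : ∀ x t : ZMod 5, ¬(t = x + 1 ∨ t = x + -1) → mAzero x t = 0 := by decide
    exact hz x t ht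

lemma R1_eq_glob (f : Vtx N → ℂ) : R1 N 5 f = glob N mS1 f := by
  classical
  funext v
  show (∑ k ∈ Finset.univ.filter (fun k => lev N 5 v k = 1), f (reflV N 5 k v)) = _
  rw [Finset.sum_filter]
  unfold glob
  refine Finset.sum_congr rfl fun k _ => ?_
  have hform : ∀ x t : ZMod 5, mS1 x t = if t = -x then (if x = 1 ∨ x = 4 then 1 else 0) else 0 := by
    decide
  have hsum : ∑ t : ZMod 5, (mS1 (v k) t : ℂ) * f (Function.update v k t) =
      (if v k = 1 ∨ v k = 4 then (1:ℂ) else 0) * f (Function.update v k (-(v k))) := by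
    rw [Finset.sum_eq_single (-(v k))]
    · rw [hform]
      simp
    · intro t _ ht
      rw [hform, if_neg ht]
      simp
    · simp
  rw [hsum]
  have hlev : lev N 5 v k = 1 ↔ (v k = 1 ∨ v k = 4) := by
    rw [lev_eq_locLev]
    have : ∀ x : ZMod 5, locLev x = 1 ↔ (x = 1 ∨ x = 4) := by decide
    exact this (v k)
  have hrefl : reflV N 5 k v = Function.update v k (-(v k)) := rfl
  rw [hrefl]
  by_cases h : v k = 1 ∨ v k = 4
  · rw [if_pos (hlev.mpr h), if_pos h, one_mul]
  · rw [if_neg (fun hc => h (hlev.mp hc)), if_neg h, zero_mul]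

open Classical in
lemma Aop_split (f : Vtx N → ℂ) (v : Vtx N) :
    Aop N 5 f v = Aplus N 5 f v + Azero N 5 f v + Aminus N 5 f v := by
  classical
  show (∑ w : Vtx N, if adj N 5 v w then f w else 0) = _
  have : ∀ w : Vtx N, (if adj N 5 v w then f w else 0) =
      (if adj N 5 v w ∧ distO N 5 w < distO N 5 v then f w else 0) +
      (if adj N 5 v w ∧ distO N 5 w = distO N 5 v then f w else 0) +
      (if adj N 5 v w ∧ distO N 5 v < distO N 5 w then f w else 0) := by
    intro w
    by_cases h : adj N 5 v w
    · rcases lt_trichotomy (distO N 5 w) (distO N 5 v) with h1 | h1 | h1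
      · rw [if_pos h, if_pos ⟨h, h1⟩, if_neg (by omega), if_neg (by omega)]
        ring
      · rw [if_pos h, if_neg (by omega), if_pos ⟨h, h1⟩, if_neg (by omega)]
        ring
      · rw [if_pos h, if_neg (by omega), if_neg (by omega), if_pos ⟨h, h1⟩]
        ring
    · rw [if_neg h, if_neg (by tauto), if_neg (by tauto), if_neg (by tauto)]
      ring
  rw [Finset.sum_congr rfl (fun w _ => this w), Finset.sum_add_distrib, Finset.sum_add_distrib]
  rfl

def ind (N : ℕ) (p' q' : ℕ) (h : Vtx N → ℂ) : Vtx N → ℂ :=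
  fun v => if cardLev N 5 v 1 = p' ∧ cardLev N 5 v 2 = q' then h v else 0

lemma subPlus_eq_ind (p' q' : ℕ) (g : Vtx N → ℂ) :
    subPlus N p' q' g = ind N p' q' (Aplus N 5 g) := by
  funext v
  by_cases h : cardLev N 5 v 1 = p' ∧ cardLev N 5 v 2 = q' <;>
    simp [subPlus, ind, h]

lemma ind_add (p' q' : ℕ) (x y : Vtx N → ℂ) :
    ind N p' q' (x + y) = ind N p' q' x + ind N p' q' y := by
  funext v
  by_cases h : cardLev N 5 v 1 = p' ∧ cardLev N 5 v 2 = q' <;> simp [ind, h]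

lemma ind_smul (p' q' : ℕ) (c : ℂ) (x : Vtx N → ℂ) :
    ind N p' q' (c • x) = c • ind N p' q' x := by
  funext v
  by_cases h : cardLev N 5 v 1 = p' ∧ cardLev N 5 v 2 = q' <;> simp [ind, h]

lemma ind_zero (p' q' : ℕ) : ind N p' q' (0 : Vtx N → ℂ) = 0 := by
  funext v
  by_cases h : cardLev N 5 v 1 = p' ∧ cardLev N 5 v 2 = q' <;> simp [ind, h]

lemma ind_neg (p' q' : ℕ) (x : Vtx N → ℂ) : ind N p' q' (-x) = -(ind N p' q' x) := by
  funext v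
  by_cases h : cardLev N 5 v 1 = p' ∧ cardLev N 5 v 2 = q' <;> simp [ind, h]

lemma ind_sub (p' q' : ℕ) (x y : Vtx N → ℂ) :
    ind N p' q' (x - y) = ind N p' q' x - ind N p' q' y := by
  funext v
  by_cases h : cardLev N 5 v 1 = p' ∧ cardLev N 5 v 2 = q' <;> simp [ind, h]

noncomputable def indHom (p' q' : ℕ) : (Vtx N → ℂ) →+ (Vtx N → ℂ) :=
  AddMonoidHom.mk' (ind N p' q') (ind_add p' q')

lemma ind_sum {ι : Type*} (p' q' : ℕ) (s : Finset ι) (F : ι → Vtx N → ℂ) :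
    ind N p' q' (∑ i ∈ s, F i) = ∑ i ∈ s, ind N p' q' (F i) :=
  map_sum (indHom (N := N) p' q') F s

lemma ind_ind (s1 s2 t1 t2 : ℕ) (y : Vtx N → ℂ) :
    ind N s1 s2 (ind N t1 t2 y) = if s1 = t1 ∧ s2 = t2 then ind N t1 t2 y else 0 := by
  funext v
  by_cases h : s1 = t1 ∧ s2 = t2
  · obtain ⟨h1, h2⟩ := h
    subst h1; subst h2
    by_cases hv : cardLev N 5 v 1 = s1 ∧ cardLev N 5 v 2 = s2 <;> simp [ind, hv]
  · rw [if_neg h]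
    by_cases hv : cardLev N 5 v 1 = s1 ∧ cardLev N 5 v 2 = s2
    · have : ¬(cardLev N 5 v 1 = t1 ∧ cardLev N 5 v 2 = t2) := by
        rintro ⟨ha, hb⟩
        exact h ⟨hv.1.symm.trans ha, hv.2.symm.trans hb⟩
      simp only [ind, hv, this, if_true, if_false, and_self, Pi.zero_apply, if_pos hv]
      rw [if_neg h]
    · simp [ind, hv]

/-- the profile decomposition -/
lemma decomp (h : Vtx N → ℂ) :
    ∑ T ∈ (Finset.range (N+1)) ×ˢ (Finset.range (N+1)), ind N T.1 T.2 h = h := by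
  funext v
  rw [Finset.sum_apply]
  have hind : ∀ T : ℕ × ℕ, ind N T.1 T.2 h v =
      if T = (cardLev N 5 v 1, cardLev N 5 v 2) then h v else 0 := by
    rintro ⟨a, b⟩
    unfold ind
    by_cases hT : (a, b) = (cardLev N 5 v 1, cardLev N 5 v 2)
    · rw [Prod.mk.injEq] at hT
      obtain ⟨h1, h2⟩ := hT
      subst h1; subst h2
      simp
    · rw [if_neg, if_neg hT]
      rintro ⟨h1, h2⟩
      exact hT (by rw [Prod.mk.injEq]; exact ⟨h1.symm, h2.symm⟩)
  rw [Finset.sum_congr rfl (fun T _ => hind T), Finset.sum_ite_eq']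
  rw [if_pos]
  simp only [Finset.mem_product, Finset.mem_range]
  constructor <;> exact Nat.lt_succ_of_le (cardLev_le v _)

/-- homogeneity: pushing `glob` past an indicator -/
lemma glob_ind (M : ZMod 5 → ZMod 5 → ℤ) (a b : ℕ)
    (hM : ∀ x t, M x t ≠ 0 → locLev x = a ∧ locLev t = b)
    (p' q' : ℕ) (h : Vtx N → ℂ) (v : Vtx N) :
    glob N M (ind N p' q' h) v =
      if (cardLev N 5 v 1 + (if b = 1 then 1 else 0) = p' + (if a = 1 then 1 else 0) ∧
          cardLev N 5 v 2 + (if b = 2 then 1 else 0) = q' + (if a = 2 then 1 else 0))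
      then glob N M h v else 0 := by
  classical
  have key : ∀ k : Fin N, ∀ t : ZMod 5, locLev (v k) = a → locLev t = b →
      ((cardLev N 5 (Function.update v k t) 1 = p' ∧ cardLev N 5 (Function.update v k t) 2 = q') ↔
        (cardLev N 5 v 1 + (if b = 1 then 1 else 0) = p' + (if a = 1 then 1 else 0) ∧
         cardLev N 5 v 2 + (if b = 2 then 1 else 0) = q' + (if a = 2 then 1 else 0))) := by
    intro k t hx ht
    have e1 := cardLev_update v k t 1
    have e2 := cardLev_update v k t 2
    rw [lev_eq_locLev, hx, ht] at e1 e2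
    constructor
    · rintro ⟨h1, h2⟩
      subst h1; subst h2
      constructor <;> omega
    · rintro ⟨h1, h2⟩
      constructor <;> omega
  by_cases hC : (cardLev N 5 v 1 + (if b = 1 then 1 else 0) = p' + (if a = 1 then 1 else 0) ∧
      cardLev N 5 v 2 + (if b = 2 then 1 else 0) = q' + (if a = 2 then 1 else 0))
  · rw [if_pos hC]
    unfold glob
    refine Finset.sum_congr rfl fun k _ => Finset.sum_congr rfl fun t _ => ?_
    by_cases hz : M (v k) t = 0
    · simp [hz]
    · obtain ⟨hx, ht⟩ := hM _ _ hz
      congr 1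
      unfold ind
      rw [if_pos ((key k t hx ht).mpr hC)]
  · rw [if_neg hC]
    unfold glob
    rw [Finset.sum_eq_zero]
    intro k _
    rw [Finset.sum_eq_zero]
    intro t _
    by_cases hz : M (v k) t = 0
    · simp [hz]
    · obtain ⟨hx, ht⟩ := hM _ _ hz
      unfold ind
      rw [if_neg (fun hc => hC ((key k t hx ht).mp hc))]
      simp

def Wrd (N p q : ℕ) (lam : ℂ) : Set ((Vtx N) → ℂ) :=
  {g | ∃ L : List ((Vtx N → ℂ) → (Vtx N → ℂ)),
      (∀ T ∈ L, T ∈ Gops N) ∧ ∃ f ∈ W5 N p q lam, g = L.foldr (fun T h => T h) f}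

lemma V5_eq (p q : ℕ) (lam : ℂ) : V5 N p q lam = Submodule.span ℂ (Wrd N p q lam) := rfl

lemma gop_add (T : (Vtx N → ℂ) → (Vtx N → ℂ)) (hT : T ∈ Gops N) (x y : Vtx N → ℂ) :
    T (x + y) = T x + T y := by
  rcases hT with hT | ⟨p', q', hT⟩
  · subst hT
    rw [Azero_eq_glob, Azero_eq_glob, Azero_eq_glob, glob_fn_add]
  · subst hT
    rw [subPlus_eq_ind, subPlus_eq_ind, subPlus_eq_ind, Aplus_eq_glob, Aplus_eq_glob,
        Aplus_eq_glob, glob_fn_add, ind_add]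

lemma gop_smul (T : (Vtx N → ℂ) → (Vtx N → ℂ)) (hT : T ∈ Gops N) (c : ℂ) (x : Vtx N → ℂ) :
    T (c • x) = c • T x := by
  rcases hT with hT | ⟨p', q', hT⟩
  · subst hT
    rw [Azero_eq_glob, Azero_eq_glob, glob_fn_smul]
  · subst hT
    rw [subPlus_eq_ind, subPlus_eq_ind, Aplus_eq_glob, Aplus_eq_glob, glob_fn_smul, ind_smul]

lemma gop_zero (T : (Vtx N → ℂ) → (Vtx N → ℂ)) (hT : T ∈ Gops N) :
    T (0 : Vtx N → ℂ) = 0 := by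
  rcases hT with hT | ⟨p', q', hT⟩
  · subst hT
    rw [Azero_eq_glob, glob_fn_zero]
  · subst hT
    rw [subPlus_eq_ind, Aplus_eq_glob, glob_fn_zero, ind_zero]

lemma gop_mapsV {p q : ℕ} {lam : ℂ} (T : (Vtx N → ℂ) → (Vtx N → ℂ)) (hT : T ∈ Gops N)
    (x : Vtx N → ℂ) (hx : x ∈ V5 N p q lam) : T x ∈ V5 N p q lam := by
  rw [V5_eq] at hx ⊢
  induction hx using Submodule.span_induction with
  | mem z hz =>
      obtain ⟨L, hL, f, hf, rfl⟩ := hz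
      exact Submodule.subset_span ⟨T :: L, by
        constructor
        · intro T' hT'
          rcases List.mem_cons.mp hT' with h | h
          · exact h ▸ hT
          · exact hL T' h
        · exact ⟨f, hf, rfl⟩⟩
  | zero => rw [gop_zero T hT]; exact Submodule.zero_mem _
  | add a b _ _ ha hb => rw [gop_add T hT]; exact Submodule.add_mem _ ha hb
  | smul c a _ ha => rw [gop_smul T hT]; exact Submodule.smul_mem _ c ha

lemma Azero_mem_Gops : (Azero N 5 : (Vtx N → ℂ) → (Vtx N → ℂ)) ∈ Gops N := Or.inl rfl
lemma subPlus_mem_Gops (p' q' : ℕ) : (subPlus N p' q' : (Vtx N → ℂ) → (Vtx N → ℂ)) ∈ Gops N :=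
  Or.inr ⟨p', q', rfl⟩

section Absorb
variable {p q : ℕ} {lam : ℂ}

lemma homog_mL10 : ∀ x t, mL10 x t ≠ 0 → locLev x = 1 ∧ locLev t = 0 := by decide
lemma homog_mL21 : ∀ x t, mL21 x t ≠ 0 → locLev x = 2 ∧ locLev t = 1 := by decide
lemma homog_mR01 : ∀ x t, mR01 x t ≠ 0 → locLev x = 0 ∧ locLev t = 1 := by decide
lemma homog_mR12 : ∀ x t, mR12 x t ≠ 0 → locLev x = 1 ∧ locLev t = 2 := by decide
lemma homog_mS1 : ∀ x t, mS1 x t ≠ 0 → locLev x = 1 ∧ locLev t = 1 := by decide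
lemma homog_mB0 : ∀ x t, mB0 x t ≠ 0 → locLev x = 1 ∧ locLev t = 2 := by decide
lemma homog_mB1 : ∀ x t, mB1 x t ≠ 0 → locLev x = 2 ∧ locLev t = 1 := by decide
lemma homog_mB2 : ∀ x t, mB2 x t ≠ 0 → locLev x = 2 ∧ locLev t = 0 := by decide
lemma homog_mAzero : ∀ x t, mAzero x t ≠ 0 → locLev x = 2 ∧ locLev t = 2 := by decide

lemma mAplus_split : mAplus = fun x t => mL10 x t + mL21 x t := by
  funext x t
  exact (by decide : ∀ x t, mAplus x t = mL10 x t + mL21 x t) x t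

lemma mAminus_split : mAminus = fun x t => mR01 x t + mR12 x t := by
  funext x t
  exact (by decide : ∀ x t, mAminus x t = mR01 x t + mR12 x t) x t

lemma ind_mem_of_shape {x : Vtx N → ℂ} {t1 t2 : ℕ} (hx : x ∈ V5 N p q lam)
    (hshape : ind N t1 t2 x = x) (s1 s2 : ℕ) : ind N s1 s2 x ∈ V5 N p q lam := by
  rw [← hshape, ind_ind]
  split
  · rw [hshape]; exact hx
  · exact Submodule.zero_mem _

lemma piece_L10 {t1 t2 : ℕ} {h' : Vtx N → ℂ} (hh : h' ∈ V5 N p q lam)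
    (hsup : ind N t1 t2 h' = h') :
    glob N mL10 h' ∈ V5 N p q lam ∧ ind N (t1+1) t2 (glob N mL10 h') = glob N mL10 h' := by
  have fact1 : glob N mL10 h' = ind N (t1+1) t2 (glob N mL10 h') := by
    funext v
    conv_lhs => rw [← hsup]
    rw [glob_ind mL10 1 0 homog_mL10 t1 t2 h' v]
    unfold ind
    have hiff : (cardLev N 5 v 1 + (if (0:ℕ) = 1 then 1 else 0) = t1 + (if (1:ℕ) = 1 then 1 else 0) ∧
        cardLev N 5 v 2 + (if (0:ℕ) = 2 then 1 else 0) = t2 + (if (1:ℕ) = 2 then 1 else 0)) ↔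
        (cardLev N 5 v 1 = t1 + 1 ∧ cardLev N 5 v 2 = t2) := by
      norm_num
    rw [if_congr hiff rfl rfl]
  have fact2 : ind N (t1+1) t2 (glob N mL21 h') = 0 := by
    funext v
    unfold ind
    by_cases hv : cardLev N 5 v 1 = t1 + 1 ∧ cardLev N 5 v 2 = t2
    · rw [if_pos hv]
      conv_lhs => rw [← hsup]
      rw [glob_ind mL21 2 1 homog_mL21 t1 t2 h' v, if_neg]
      · simp
      · obtain ⟨hv1, hv2⟩ := hv
        rintro ⟨hc1, hc2⟩
        (try simp at hc1 hc2) <;> omega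
    · rw [if_neg hv]; simp
  have hsub : subPlus N (t1+1) t2 h' = glob N mL10 h' := by
    rw [subPlus_eq_ind, Aplus_eq_glob, mAplus_split, glob_madd, ind_add, ← fact1, fact2, add_zero]
  constructor
  · rw [← hsub]
    exact gop_mapsV _ (subPlus_mem_Gops _ _) _ hh
  · exact fact1.symm

lemma piece_L21 {t1 t2 : ℕ} {h' : Vtx N → ℂ} (hh : h' ∈ V5 N p q lam)
    (hsup : ind N t1 t2 h' = h') :
    glob N mL21 h' ∈ V5 N p q lam ∧ ind N (t1-1) (t2+1) (glob N mL21 h') = glob N mL21 h' := by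
  rcases t1 with _ | t
  · have fact0 : glob N mL21 h' = 0 := by
      funext v
      conv_lhs => rw [← hsup]
      rw [glob_ind mL21 2 1 homog_mL21 0 t2 h' v, if_neg]
      · simp
      · rintro ⟨hc1, hc2⟩
        (try simp at hc1 hc2) <;> omega
    rw [fact0]
    exact ⟨Submodule.zero_mem _, ind_zero _ _⟩
  · have fact1 : glob N mL21 h' = ind N t (t2+1) (glob N mL21 h') := by
      funext v
      conv_lhs => rw [← hsup]
      rw [glob_ind mL21 2 1 homog_mL21 (t+1) t2 h' v]
      unfold ind
      have hiff : (cardLev N 5 v 1 + (if (1:ℕ) = 1 then 1 else 0) = (t+1) + (if (2:ℕ) = 1 then 1 else 0) ∧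
          cardLev N 5 v 2 + (if (1:ℕ) = 2 then 1 else 0) = t2 + (if (2:ℕ) = 2 then 1 else 0)) ↔
          (cardLev N 5 v 1 = t ∧ cardLev N 5 v 2 = t2 + 1) := by
        norm_num
      rw [if_congr hiff rfl rfl]
    have fact2 : ind N t (t2+1) (glob N mL10 h') = 0 := by
      funext v
      unfold ind
      by_cases hv : cardLev N 5 v 1 = t ∧ cardLev N 5 v 2 = t2 + 1
      · rw [if_pos hv]
        conv_lhs => rw [← hsup]
        rw [glob_ind mL10 1 0 homog_mL10 (t+1) t2 h' v, if_neg]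
        · simp
        · obtain ⟨hv1, hv2⟩ := hv
          rintro ⟨hc1, hc2⟩
          (try simp at hc1 hc2) <;> omega
      · rw [if_neg hv]; simp
    have hsub : subPlus N t (t2+1) h' = glob N mL21 h' := by
      rw [subPlus_eq_ind, Aplus_eq_glob, mAplus_split, glob_madd, ind_add, fact2, ← fact1, zero_add]
    constructor
    · rw [← hsub]
      exact gop_mapsV _ (subPlus_mem_Gops _ _) _ hh
    · simpa using fact1.symm

lemma piece_N {t1 t2 : ℕ} {h' : Vtx N → ℂ} (hh : h' ∈ V5 N p q lam)
    (hsup : ind N t1 t2 h' = h') :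
    glob N mAzero h' ∈ V5 N p q lam ∧ ind N t1 t2 (glob N mAzero h') = glob N mAzero h' := by
  have fact1 : glob N mAzero h' = ind N t1 t2 (glob N mAzero h') := by
    funext v
    conv_lhs => rw [← hsup]
    rw [glob_ind mAzero 2 2 homog_mAzero t1 t2 h' v]
    unfold ind
    have hiff : (cardLev N 5 v 1 + (if (2:ℕ) = 1 then 1 else 0) = t1 + (if (2:ℕ) = 1 then 1 else 0) ∧
        cardLev N 5 v 2 + (if (2:ℕ) = 2 then 1 else 0) = t2 + (if (2:ℕ) = 2 then 1 else 0)) ↔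
        (cardLev N 5 v 1 = t1 ∧ cardLev N 5 v 2 = t2) := by
      norm_num
    rw [if_congr hiff rfl rfl]
  constructor
  · rw [← Azero_eq_glob]
    exact gop_mapsV _ Azero_mem_Gops _ hh
  · exact fact1.symm

/-- The generic absorb lemma -/
lemma absorb (M : ZMod 5 → ZMod 5 → ℤ)
    (hMpiece : ∀ (t1 t2 : ℕ) (h' : Vtx N → ℂ), h' ∈ V5 N p q lam → ind N t1 t2 h' = h' →
      ∃ u1 u2, glob N M h' ∈ V5 N p q lam ∧ ind N u1 u2 (glob N M h') = glob N M h')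
    (h : Vtx N → ℂ) (hh : ∀ t1 t2, ind N t1 t2 h ∈ V5 N p q lam) (s1 s2 : ℕ) :
    ind N s1 s2 (glob N M h) ∈ V5 N p q lam := by
  have hde : ind N s1 s2 (glob N M h) =
      ∑ T ∈ (Finset.range (N+1)) ×ˢ (Finset.range (N+1)),
        ind N s1 s2 (glob N M (ind N T.1 T.2 h)) := by
    conv_lhs => rw [← decomp h]
    rw [glob_fn_sum, ind_sum]
  rw [hde]
  refine Submodule.sum_mem _ fun T _ => ?_
  have hidem : ind N T.1 T.2 (ind N T.1 T.2 h) = ind N T.1 T.2 h := by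
    rw [ind_ind, if_pos ⟨rfl, rfl⟩]
  obtain ⟨u1, u2, hmem, hshape⟩ := hMpiece T.1 T.2 (ind N T.1 T.2 h) (hh T.1 T.2) hidem
  exact ind_mem_of_shape hmem hshape s1 s2

lemma absorb_L10 (h : Vtx N → ℂ) (hh : ∀ t1 t2, ind N t1 t2 h ∈ V5 N p q lam) (s1 s2 : ℕ) :
    ind N s1 s2 (glob N mL10 h) ∈ V5 N p q lam :=
  absorb mL10 (fun t1 t2 h' h1 h2 => ⟨t1+1, t2, piece_L10 h1 h2⟩) h hh s1 s2

lemma absorb_L21 (h : Vtx N → ℂ) (hh : ∀ t1 t2, ind N t1 t2 h ∈ V5 N p q lam) (s1 s2 : ℕ) :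
    ind N s1 s2 (glob N mL21 h) ∈ V5 N p q lam :=
  absorb mL21 (fun t1 t2 h' h1 h2 => ⟨t1-1, t2+1, piece_L21 h1 h2⟩) h hh s1 s2

lemma absorb_N (h : Vtx N → ℂ) (hh : ∀ t1 t2, ind N t1 t2 h ∈ V5 N p q lam) (s1 s2 : ℕ) :
    ind N s1 s2 (glob N mAzero h) ∈ V5 N p q lam :=
  absorb mAzero (fun t1 t2 h' h1 h2 => ⟨t1, t2, piece_N h1 h2⟩) h hh s1 s2

end Absorb

section Invariant
variable {p q : ℕ} {lam : ℂ}

lemma mem_V_of_ind {g : Vtx N → ℂ} (hg : ∀ s1 s2, ind N s1 s2 g ∈ V5 N p q lam) :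
    g ∈ V5 N p q lam := by
  rw [← decomp g]
  exact Submodule.sum_mem _ fun T _ => hg T.1 T.2

lemma glob_mId (g : Vtx N → ℂ) : glob N mId g = (N : ℂ) • g := by
  funext v
  unfold glob
  have hk : ∀ k : Fin N, ∑ t : ZMod 5, (mId (v k) t : ℂ) * g (Function.update v k t) = g v := by
    intro k
    rw [Finset.sum_eq_single (v k)]
    · simp [mId, Function.update_eq_self]
    · intro t _ ht
      simp [mId, ht]
    · simp
  rw [Finset.sum_congr rfl fun k _ => hk k, Finset.sum_const, Finset.card_univ, Fintype.card_fin]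
  simp [nsmul_eq_mul]

lemma glob_mP1 (g : Vtx N → ℂ) : glob N mP1 g = fun v => (cardLev N 5 v 1 : ℂ) * g v := by
  funext v
  unfold glob
  have hk : ∀ k : Fin N, ∑ t : ZMod 5, (mP1 (v k) t : ℂ) * g (Function.update v k t) =
      if lev N 5 v k = 1 then g v else 0 := by
    intro k
    rw [Finset.sum_eq_single (v k)]
    · have hlev : lev N 5 v k = 1 ↔ (v k = 1 ∨ v k = 4) := by
        rw [lev_eq_locLev]
        exact (by decide : ∀ x : ZMod 5, locLev x = 1 ↔ (x = 1 ∨ x = 4)) (v k)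
      by_cases h : v k = 1 ∨ v k = 4
      · rw [if_pos (hlev.mpr h)]
        simp [mP1, h, Function.update_eq_self]
      · rw [if_neg (fun hc => h (hlev.mp hc))]
        simp [mP1, h]
    · intro t _ ht
      simp [mP1, ht]
    · simp
  rw [Finset.sum_congr rfl fun k _ => hk k, ← Finset.sum_filter, Finset.sum_const]
  rw [show (cardLev N 5 v 1 : ℂ) = ((Finset.univ.filter (fun k => lev N 5 v k = 1)).card : ℂ) from rfl]
  simp [nsmul_eq_mul]

lemma glob_mP2 (g : Vtx N → ℂ) : glob N mP2 g = fun v => (cardLev N 5 v 2 : ℂ) * g v := by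
  funext v
  unfold glob
  have hk : ∀ k : Fin N, ∑ t : ZMod 5, (mP2 (v k) t : ℂ) * g (Function.update v k t) =
      if lev N 5 v k = 2 then g v else 0 := by
    intro k
    rw [Finset.sum_eq_single (v k)]
    · have hlev : lev N 5 v k = 2 ↔ (v k = 2 ∨ v k = 3) := by
        rw [lev_eq_locLev]
        exact (by decide : ∀ x : ZMod 5, locLev x = 2 ↔ (x = 2 ∨ x = 3)) (v k)
      by_cases h : v k = 2 ∨ v k = 3
      · rw [if_pos (hlev.mpr h)]
        simp [mP2, h, Function.update_eq_self]
      · rw [if_neg (fun hc => h (hlev.mp hc))]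
        simp [mP2, h]
    · intro t _ ht
      simp [mP2, ht]
    · simp
  rw [Finset.sum_congr rfl fun k _ => hk k, ← Finset.sum_filter, Finset.sum_const]
  rw [show (cardLev N 5 v 2 : ℂ) = ((Finset.univ.filter (fun k => lev N 5 v k = 2)).card : ℂ) from rfl]
  simp [nsmul_eq_mul]

lemma ind_P1 (s1 s2 : ℕ) (g : Vtx N → ℂ) :
    ind N s1 s2 (glob N mP1 g) = (s1 : ℂ) • ind N s1 s2 g := by
  rw [glob_mP1]
  funext v
  unfold ind
  by_cases hv : cardLev N 5 v 1 = s1 ∧ cardLev N 5 v 2 = s2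
  · rw [if_pos hv]
    simp [hv.1, hv.2]
  · rw [if_neg hv]
    simp [hv]

lemma ind_P2 (s1 s2 : ℕ) (g : Vtx N → ℂ) :
    ind N s1 s2 (glob N mP2 g) = (s2 : ℂ) • ind N s1 s2 g := by
  rw [glob_mP2]
  funext v
  unfold ind
  by_cases hv : cardLev N 5 v 1 = s1 ∧ cardLev N 5 v 2 = s2
  · rw [if_pos hv]
    simp [hv.1, hv.2]
  · rw [if_neg hv]
    simp [hv]

lemma ind_glob_ind (M : ZMod 5 → ZMod 5 → ℤ) (a b : ℕ)
    (hM : ∀ x t, M x t ≠ 0 → locLev x = a ∧ locLev t = b)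
    (p' q' : ℕ) (y : Vtx N → ℂ) (s1 s2 : ℕ) :
    ind N s1 s2 (glob N M (ind N p' q' y)) =
      if (s1 + (if b = 1 then 1 else 0) = p' + (if a = 1 then 1 else 0) ∧
          s2 + (if b = 2 then 1 else 0) = q' + (if a = 2 then 1 else 0))
      then ind N s1 s2 (glob N M y) else 0 := by
  funext v
  by_cases hv : cardLev N 5 v 1 = s1 ∧ cardLev N 5 v 2 = s2
  · obtain ⟨hv1, hv2⟩ := hv
    have e1 : ind N s1 s2 (glob N M (ind N p' q' y)) v = glob N M (ind N p' q' y) v := by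
      unfold ind
      rw [if_pos ⟨hv1, hv2⟩]
    rw [e1, glob_ind M a b hM p' q' y v, hv1, hv2]
    by_cases hc : (s1 + (if b = 1 then 1 else 0) = p' + (if a = 1 then 1 else 0) ∧
        s2 + (if b = 2 then 1 else 0) = q' + (if a = 2 then 1 else 0))
    · rw [if_pos hc, if_pos hc]
      unfold ind
      rw [if_pos ⟨hv1, hv2⟩]
    · rw [if_neg hc, if_neg hc]
      simp
  · have e1 : ind N s1 s2 (glob N M (ind N p' q' y)) v = 0 := by
      unfold ind
      rw [if_neg hv]
    rw [e1]
    by_cases hc : (s1 + (if b = 1 then 1 else 0) = p' + (if a = 1 then 1 else 0) ∧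
        s2 + (if b = 2 then 1 else 0) = q' + (if a = 2 then 1 else 0))
    · rw [if_pos hc]
      simp only [ind]
      rw [if_neg hv]
    · rw [if_neg hc]
      rfl

/-- glob of a 4-term integer combination -/
lemma glob_lin4 (c1 c2 c3 c4 : ℤ) (M1 M2 M3 M4 : ZMod 5 → ZMod 5 → ℤ) (g : Vtx N → ℂ) :
    glob N (fun x t => c1 * M1 x t + c2 * M2 x t + c3 * M3 x t + c4 * M4 x t) g =
      (c1:ℂ) • glob N M1 g + (c2:ℂ) • glob N M2 g + (c3:ℂ) • glob N M3 g + (c4:ℂ) • glob N M4 g := by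
  rw [glob_madd (fun x t => c1 * M1 x t + c2 * M2 x t + c3 * M3 x t) (fun x t => c4 * M4 x t)]
  rw [glob_madd (fun x t => c1 * M1 x t + c2 * M2 x t) (fun x t => c3 * M3 x t)]
  rw [glob_madd (fun x t => c1 * M1 x t) (fun x t => c2 * M2 x t)]
  rw [glob_msmul, glob_msmul, glob_msmul, glob_msmul]

def OpsL : List (ZMod 5 → ZMod 5 → ℤ) := [mR01, mR12, mS1, mB0, mB1, mB2]

def Inv (N p q : ℕ) (lam : ℂ) (g : Vtx N → ℂ) : Prop :=
  (∀ s1 s2, ind N s1 s2 g ∈ V5 N p q lam) ∧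
  ∀ M ∈ OpsL, ∀ s1 s2, ind N s1 s2 (glob N M g) ∈ V5 N p q lam

end Invariant

section BaseStep
variable {p q : ℕ} {lam : ℂ}

lemma base_case (f : Vtx N → ℂ) (hf : f ∈ W5 N p q lam) : Inv N p q lam f := by
  obtain ⟨hsupp, hAm, hR1, μ, hAz⟩ := hf
  have hfV : f ∈ V5 N p q lam :=
    Submodule.subset_span ⟨[], by simp, f, ⟨hsupp, hAm, hR1, μ, hAz⟩, rfl⟩
  have hind : ind N p q f = f := by
    funext v
    by_cases hv : cardLev N 5 v 1 = p ∧ cardLev N 5 v 2 = q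
    · exact if_pos hv
    · rw [ind, if_neg hv, (hsupp v hv)]
  have hindS : ∀ s1 s2, ind N s1 s2 f ∈ V5 N p q lam := ind_mem_of_shape hfV hind
  have hsum : glob N mR01 f + glob N mR12 f = 0 := by
    rw [← glob_madd, ← mAminus_split, ← Aminus_eq_glob, hAm]
  have h01shape : ∀ v : Vtx N, ¬(cardLev N 5 v 1 + 1 = p ∧ cardLev N 5 v 2 = q) →
      glob N mR01 f v = 0 := by
    intro v hv
    conv_lhs => rw [← hind]
    rw [glob_ind mR01 0 1 homog_mR01 p q f v, if_neg]
    rintro ⟨hc1, hc2⟩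
    (try simp at hc1 hc2) <;> exact hv ⟨by omega, by omega⟩
  have h12shape : ∀ v : Vtx N, ¬(cardLev N 5 v 1 = p + 1 ∧ cardLev N 5 v 2 + 1 = q) →
      glob N mR12 f v = 0 := by
    intro v hv
    conv_lhs => rw [← hind]
    rw [glob_ind mR12 1 2 homog_mR12 p q f v, if_neg]
    rintro ⟨hc1, hc2⟩
    (try simp at hc1 hc2) <;> exact hv ⟨by omega, by omega⟩
  have hR01 : glob N mR01 f = 0 := by
    funext v
    have hpt := congrFun hsum v
    simp only [Pi.add_apply, Pi.zero_apply] at hpt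
    simp only [Pi.zero_apply]
    by_cases hc : cardLev N 5 v 1 + 1 = p ∧ cardLev N 5 v 2 = q
    · have h12 : glob N mR12 f v = 0 := by
        refine h12shape v ?_
        rintro ⟨ha, hb⟩
        obtain ⟨hc1, hc2⟩ := hc
        omega
      rw [h12, add_zero] at hpt
      exact hpt
    · exact h01shape v hc
  have hR12 : glob N mR12 f = 0 := by
    funext v
    have hpt := congrFun hsum v
    simp only [Pi.add_apply, Pi.zero_apply] at hpt
    have h01 := congrFun hR01 v
    simp only [Pi.zero_apply] at h01
    rw [h01, zero_add] at hpt
    simpa using hpt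
  have hS1 : glob N mS1 f = lam • f := by rw [← R1_eq_glob, hR1]
  have hB0 : glob N mB0 f = 0 := by
    have hcomm := glob_comm mS1 mAminus (N := N) f
    have hAm0 : glob N mAminus f = 0 := by rw [← Aminus_eq_glob, hAm]
    have hbr : brkt mS1 mAminus = fun x t => mB0 x t - mR01 x t := by
      funext x t
      exact (by decide : ∀ x t, brkt mS1 mAminus x t = mB0 x t - mR01 x t) x t
    rw [hAm0, glob_fn_zero, hS1, glob_fn_smul, hAm0, smul_zero, zero_add, hbr,
        glob_msub, hR01, sub_zero] at hcomm
    exact hcomm.symm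
  have hAz' : glob N mAzero f = μ • f := by rw [← Azero_eq_glob, hAz]
  have hB1eq : glob N mB1 f = glob N mAzero (glob N mL21 f) - μ • glob N mL21 f := by
    have hcomm := glob_comm mAzero mL21 (N := N) f
    have hbr : brkt mAzero mL21 = mB1 := by
      funext x t
      exact (by decide : ∀ x t, brkt mAzero mL21 x t = mB1 x t) x t
    rw [hbr] at hcomm
    have h2 : glob N mL21 (glob N mAzero f) = μ • glob N mL21 f := by
      rw [hAz', glob_fn_smul]
    rw [h2] at hcomm
    rw [hcomm]
    abel
  have hB1S : ∀ s1 s2, ind N s1 s2 (glob N mB1 f) ∈ V5 N p q lam := by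
    intro s1 s2
    rw [hB1eq, ind_sub, ind_smul]
    refine Submodule.sub_mem _ ?_ (Submodule.smul_mem _ _ ?_)
    · exact absorb_N _ (absorb_L21 f hindS) s1 s2
    · exact absorb_L21 f hindS s1 s2
  have hB2eq : glob N mB2 f = glob N mL21 (glob N mL10 f) - glob N mL10 (glob N mL21 f) := by
    have hcomm := glob_comm mL21 mL10 (N := N) f
    have hbr : brkt mL21 mL10 = mB2 := by
      funext x t
      exact (by decide : ∀ x t, brkt mL21 mL10 x t = mB2 x t) x t
    rw [hbr] at hcomm
    rw [hcomm]
    abel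
  have hB2S : ∀ s1 s2, ind N s1 s2 (glob N mB2 f) ∈ V5 N p q lam := by
    intro s1 s2
    rw [hB2eq, ind_sub]
    refine Submodule.sub_mem _ ?_ ?_
    · exact absorb_L21 _ (absorb_L10 f hindS) s1 s2
    · exact absorb_L10 _ (absorb_L21 f hindS) s1 s2
  refine ⟨hindS, ?_⟩
  intro M hM s1 s2
  simp only [OpsL, List.mem_cons, List.not_mem_nil, or_false] at hM
  rcases hM with rfl | rfl | rfl | rfl | rfl | rfl
  · rw [hR01, ind_zero]; exact Submodule.zero_mem _
  · rw [hR12, ind_zero]; exact Submodule.zero_mem _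
  · rw [hS1, ind_smul]; exact Submodule.smul_mem _ _ (hindS s1 s2)
  · rw [hB0, ind_zero]; exact Submodule.zero_mem _
  · exact hB1S s1 s2
  · exact hB2S s1 s2

end BaseStep

section Steps
variable {p q : ℕ} {lam : ℂ}

lemma step_Azero {g : Vtx N → ℂ} (hg : Inv N p q lam g) : Inv N p q lam (Azero N 5 g) := by
  obtain ⟨h0, hOps⟩ := hg
  constructor
  · intro s1 s2
    rw [Azero_eq_glob]
    exact absorb_N g h0 s1 s2
  · intro M hM s1 s2
    rw [Azero_eq_glob, glob_comm M mAzero g, ind_add]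
    refine Submodule.add_mem _ (absorb_N _ (fun t1 t2 => hOps M hM t1 t2) s1 s2) ?_
    simp only [OpsL, List.mem_cons, List.not_mem_nil, or_false] at hM
    rcases hM with rfl | rfl | rfl | rfl | rfl | rfl
    · have hbr : brkt mR01 mAzero = fun _ _ => (0:ℤ) := by
        funext x t
        exact (by decide : ∀ x t, brkt mR01 mAzero x t = 0) x t
      rw [hbr, glob_mzero, ind_zero]
      exact Submodule.zero_mem _
    · have hbr : brkt mR12 mAzero = mB0 := by
        funext x t
        exact (by decide : ∀ x t, brkt mR12 mAzero x t = mB0 x t) x t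
      rw [hbr]
      exact hOps mB0 (by simp [OpsL]) s1 s2
    · have hbr : brkt mS1 mAzero = fun _ _ => (0:ℤ) := by
        funext x t
        exact (by decide : ∀ x t, brkt mS1 mAzero x t = 0) x t
      rw [hbr, glob_mzero, ind_zero]
      exact Submodule.zero_mem _
    · have hbr : brkt mB0 mAzero = mR12 := by
        funext x t
        exact (by decide : ∀ x t, brkt mB0 mAzero x t = mR12 x t) x t
      rw [hbr]
      exact hOps mR12 (by simp [OpsL]) s1 s2
    · have hbr : brkt mB1 mAzero = fun x t => -(mL21 x t) := by
        funext x t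
        exact (by decide : ∀ x t, brkt mB1 mAzero x t = -(mL21 x t)) x t
      rw [hbr, glob_mneg, ind_neg]
      exact Submodule.neg_mem _ (absorb_L21 g h0 s1 s2)
    · have hbr : brkt mB2 mAzero = fun x t => -(mB2 x t) := by
        funext x t
        exact (by decide : ∀ x t, brkt mB2 mAzero x t = -(mB2 x t)) x t
      rw [hbr, glob_mneg, ind_neg]
      exact Submodule.neg_mem _ (hOps mB2 (by simp [OpsL]) s1 s2)

lemma finish_step (M : ZMod 5 → ZMod 5 → ℤ) (a b : ℕ)
    (hM : ∀ x t, M x t ≠ 0 → locLev x = a ∧ locLev t = b)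
    (p' q' : ℕ) (g : Vtx N → ℂ) (s1 s2 : ℕ)
    (key : ∀ u1 u2, ind N u1 u2 (glob N M (Aplus N 5 g)) ∈ V5 N p q lam) :
    ind N s1 s2 (glob N M (subPlus N p' q' g)) ∈ V5 N p q lam := by
  rw [subPlus_eq_ind, ind_glob_ind M a b hM p' q' (Aplus N 5 g) s1 s2]
  by_cases hc : (s1 + (if b = 1 then 1 else 0) = p' + (if a = 1 then 1 else 0) ∧
      s2 + (if b = 2 then 1 else 0) = q' + (if a = 2 then 1 else 0))
  · rw [if_pos hc]
    exact key s1 s2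
  · rw [if_neg hc]
    exact Submodule.zero_mem _

lemma key_gen (M : ZMod 5 → ZMod 5 → ℤ) {g : Vtx N → ℂ}
    (hOpsM : ∀ t1 t2, ind N t1 t2 (glob N M g) ∈ V5 N p q lam)
    (hbrk : ∀ u1 u2, ind N u1 u2 (glob N (brkt M mAplus) g) ∈ V5 N p q lam) :
    ∀ u1 u2, ind N u1 u2 (glob N M (Aplus N 5 g)) ∈ V5 N p q lam := by
  intro u1 u2
  rw [Aplus_eq_glob, glob_comm M mAplus g, ind_add]
  refine Submodule.add_mem _ ?_ (hbrk u1 u2)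
  rw [mAplus_split, glob_madd, ind_add]
  exact Submodule.add_mem _ (absorb_L10 _ hOpsM u1 u2) (absorb_L21 _ hOpsM u1 u2)

lemma step_subPlus (p' q' : ℕ) {g : Vtx N → ℂ} (hg : Inv N p q lam g) :
    Inv N p q lam (subPlus N p' q' g) := by
  obtain ⟨h0, hOps⟩ := hg
  have hgV : g ∈ V5 N p q lam := mem_V_of_ind h0
  have hsubV : subPlus N p' q' g ∈ V5 N p q lam :=
    gop_mapsV _ (subPlus_mem_Gops p' q') g hgV
  have hshape : ind N p' q' (subPlus N p' q' g) = subPlus N p' q' g := by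
    rw [subPlus_eq_ind, ind_ind, if_pos ⟨rfl, rfl⟩]
  refine ⟨ind_mem_of_shape hsubV hshape, ?_⟩
  intro M hM s1 s2
  have hOpsM : ∀ t1 t2, ind N t1 t2 (glob N M g) ∈ V5 N p q lam := hOps M hM
  simp only [OpsL, List.mem_cons, List.not_mem_nil, or_false] at hM
  rcases hM with rfl | rfl | rfl | rfl | rfl | rfl
  · refine finish_step mR01 0 1 homog_mR01 p' q' g s1 s2 (key_gen mR01 hOpsM ?_)
    intro u1 u2
    have hbr : brkt mR01 mAplus =
        fun x t => 2 * mId x t + (-3) * mP1 x t + (-2) * mP2 x t + (-1) * mS1 x t := by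
      funext x t
      exact (by decide : ∀ x t, brkt mR01 mAplus x t =
        2 * mId x t + (-3) * mP1 x t + (-2) * mP2 x t + (-1) * mS1 x t) x t
    rw [hbr, glob_lin4, ind_add, ind_add, ind_add, ind_smul, ind_smul, ind_smul, ind_smul]
    refine Submodule.add_mem _ (Submodule.add_mem _ (Submodule.add_mem _ ?_ ?_) ?_) ?_
    · refine Submodule.smul_mem _ _ ?_
      rw [glob_mId, ind_smul]
      exact Submodule.smul_mem _ _ (h0 u1 u2)
    · refine Submodule.smul_mem _ _ ?_
      rw [ind_P1]
      exact Submodule.smul_mem _ _ (h0 u1 u2)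
    · refine Submodule.smul_mem _ _ ?_
      rw [ind_P2]
      exact Submodule.smul_mem _ _ (h0 u1 u2)
    · exact Submodule.smul_mem _ _ (hOps mS1 (by simp [OpsL]) u1 u2)
  · refine finish_step mR12 1 2 homog_mR12 p' q' g s1 s2 (key_gen mR12 hOpsM ?_)
    intro u1 u2
    have hbr : brkt mR12 mAplus = fun x t => mP1 x t - mP2 x t := by
      funext x t
      exact (by decide : ∀ x t, brkt mR12 mAplus x t = mP1 x t - mP2 x t) x t
    rw [hbr, glob_msub, ind_sub, ind_P1, ind_P2]
    exact Submodule.sub_mem _ (Submodule.smul_mem _ _ (h0 u1 u2))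
      (Submodule.smul_mem _ _ (h0 u1 u2))
  · refine finish_step mS1 1 1 homog_mS1 p' q' g s1 s2 (key_gen mS1 hOpsM ?_)
    intro u1 u2
    have hbr : brkt mS1 mAplus = fun x t => mL10 x t - mB1 x t := by
      funext x t
      exact (by decide : ∀ x t, brkt mS1 mAplus x t = mL10 x t - mB1 x t) x t
    rw [hbr, glob_msub, ind_sub]
    exact Submodule.sub_mem _ (absorb_L10 g h0 u1 u2) (hOps mB1 (by simp [OpsL]) u1 u2)
  · refine finish_step mB0 1 2 homog_mB0 p' q' g s1 s2 (key_gen mB0 hOpsM ?_)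
    intro u1 u2
    have hbr : brkt mB0 mAplus = fun x t => mS1 x t - mAzero x t := by
      funext x t
      exact (by decide : ∀ x t, brkt mB0 mAplus x t = mS1 x t - mAzero x t) x t
    rw [hbr, glob_msub, ind_sub]
    exact Submodule.sub_mem _ (hOps mS1 (by simp [OpsL]) u1 u2) (absorb_N g h0 u1 u2)
  · refine finish_step mB1 2 1 homog_mB1 p' q' g s1 s2 (key_gen mB1 hOpsM ?_)
    intro u1 u2
    have hbr : brkt mB1 mAplus = mB2 := by
      funext x t
      exact (by decide : ∀ x t, brkt mB1 mAplus x t = mB2 x t) x t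
    rw [hbr]
    exact hOps mB2 (by simp [OpsL]) u1 u2
  · refine finish_step mB2 2 0 homog_mB2 p' q' g s1 s2 (key_gen mB2 hOpsM ?_)
    intro u1 u2
    have hbr : brkt mB2 mAplus = fun _ _ => (0:ℤ) := by
      funext x t
      exact (by decide : ∀ x t, brkt mB2 mAplus x t = 0) x t
    rw [hbr, glob_mzero, ind_zero]
    exact Submodule.zero_mem _

end Steps

section Final
variable {p q : ℕ} {lam : ℂ}

lemma inv_word (L : List ((Vtx N → ℂ) → (Vtx N → ℂ))) (hL : ∀ T ∈ L, T ∈ Gops N)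
    (f : Vtx N → ℂ) (hf : f ∈ W5 N p q lam) :
    Inv N p q lam (L.foldr (fun T h => T h) f) := by
  induction L with
  | nil => exact base_case f hf
  | cons T L ih =>
    have hg := ih (fun T' h => hL T' (List.mem_cons_of_mem _ h))
    have hT : T ∈ Gops N := hL T List.mem_cons_self
    show Inv N p q lam (T (L.foldr (fun T h => T h) f))
    rcases hT with hT | ⟨p', q', hT⟩
    · subst hT
      exact step_Azero hg
    · subst hT
      exact step_subPlus p' q' hg

lemma Aop_eq (f : Vtx N → ℂ) :
    Aop N 5 f = glob N mAplus f + glob N mAzero f + glob N mAminus f := by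
  funext v
  rw [Pi.add_apply, Pi.add_apply, Aop_split, Aplus_eq_glob, Azero_eq_glob, Aminus_eq_glob]

lemma main_theorem : ∀ g ∈ V5 N p q lam, Aop N 5 g ∈ V5 N p q lam := by
  intro g hg
  rw [V5_eq] at hg
  induction hg using Submodule.span_induction with
  | mem x hx =>
      obtain ⟨L, hL, f, hf, rfl⟩ := hx
      have hInv := inv_word (p := p) (q := q) (lam := lam) L hL f hf
      have hxV : (L.foldr (fun T h => T h) f) ∈ V5 N p q lam := mem_V_of_ind hInv.1
      rw [Aop_eq]
      refine Submodule.add_mem _ (Submodule.add_mem _ ?_ ?_) ?_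
      · rw [mAplus_split, glob_madd]
        exact Submodule.add_mem _ (mem_V_of_ind (absorb_L10 _ hInv.1))
          (mem_V_of_ind (absorb_L21 _ hInv.1))
      · rw [← Azero_eq_glob]
        exact gop_mapsV _ Azero_mem_Gops _ hxV
      · rw [mAminus_split, glob_madd]
        exact Submodule.add_mem _ (mem_V_of_ind (hInv.2 mR01 (by simp [OpsL])))
          (mem_V_of_ind (hInv.2 mR12 (by simp [OpsL])))
  | zero =>
      have h0 : Aop N 5 (0 : Vtx N → ℂ) = 0 := by
        rw [Aop_eq, glob_fn_zero, glob_fn_zero, glob_fn_zero]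
        simp
      rw [h0]
      exact Submodule.zero_mem _
  | add x y hx hy ihx ihy =>
      have hadd : Aop N 5 (x + y) = Aop N 5 x + Aop N 5 y := by
        rw [Aop_eq, Aop_eq, Aop_eq, glob_fn_add, glob_fn_add, glob_fn_add]
        abel
      rw [hadd]
      exact Submodule.add_mem _ ihx ihy
  | smul c x hx ihx =>
      have hsmul : Aop N 5 (c • x) = c • Aop N 5 x := by
        rw [Aop_eq, Aop_eq, glob_fn_smul, glob_fn_smul, glob_fn_smul]
        rw [smul_add, smul_add]
      rw [hsmul]
      exact Submodule.smul_mem _ _ ihx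

end Final

end C5

/-- `V_{p,q,λ}` is invariant under the adjacency operator on `C_5^N`. -/
theorem adjacency_invariant_C5 (N p q : ℕ) (hN : 1 ≤ N) (lam : ℂ) :
    ∀ g ∈ V5 N p q lam, Aop N 5 g ∈ V5 N p q lam := by
  exact C5.main_theorem
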